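/- Let K be closed convex, U an affine subspace with K ∩ U ≠ ∅, S a separating operator for K, C^S the circumcenter operator and T^S = P_U ∘ P^S. Then for every x ∈ U, T^S(x) lies on the segment between x and C^S(x); more precisely C^S(x) = x + η(T^S(x) − x) for some η ≥ 1. -/

import Mathlib

open Filter Topology
open scoped RealInnerProductSpace

-- orthogonality of projection onto a set closed under affine lines
lemma aux_proj_orth {n : ℕ} (U : Set (EuclideanSpace ℝ (Fin n)))
    (hUaff : ∀ u ∈ U, ∀ v ∈ U, ∀ s : ℝ, u + s • (v - u) ∈ U)
    (PU : EuclideanSpace ℝ (Fin n) → EuclideanSpace ℝ (Fin n))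
    (hPU : ∀ y, PU y ∈ U ∧ ∀ w ∈ U, dist y (PU y) ≤ dist y w)
    (y u : EuclideanSpace ℝ (Fin n)) (hu : u ∈ U) :
    ⟪y - PU y, u - PU y⟫ = 0 := by
  set d := y - PU y with hd
  set w := u - PU y with hw
  by_contra h
  have hwne : w ≠ 0 := by
    intro h0
    rw [h0, inner_zero_right] at h
    exact h rfl
  have hwpos : (0:ℝ) < ‖w‖^2 := by
    have := norm_pos_iff.mpr hwne
    positivity
  set s : ℝ := ⟪d, w⟫ / ‖w‖^2 with hs
  have hq : PU y + s • w ∈ U := hUaff (PU y) (hPU y).1 u hu s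
  have hle : dist y (PU y) ≤ dist y (PU y + s • w) := (hPU y).2 _ hq
  have h1 : dist y (PU y + s • w) = ‖d - s • w‖ := by
    rw [dist_eq_norm]
    congr 1
    rw [hd]
    abel
  have h2 : dist y (PU y) = ‖d‖ := by rw [dist_eq_norm]
  rw [h1, h2] at hle
  clear_value d w
  have hsq : ‖d‖^2 ≤ ‖d - s • w‖^2 := by
    have := norm_nonneg d
    nlinarith [norm_nonneg (d - s • w)]
  rw [norm_sub_sq_real, real_inner_smul_right, norm_smul] at hsq
  have hws : ‖s • w‖ = |s| * ‖w‖ := by rw [norm_smul, Real.norm_eq_abs]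
  have hs2 : (|s| * ‖w‖)^2 = s^2 * ‖w‖^2 := by rw [mul_pow, sq_abs]
  have hinner : ⟪d, w⟫ ≠ 0 := h
  have e1 : s * ⟪d, w⟫ = ⟪d, w⟫^2 / ‖w‖^2 := by rw [hs]; ring
  have e2 : (‖s‖ * ‖w‖)^2 = ⟪d, w⟫^2 / ‖w‖^2 := by
    rw [Real.norm_eq_abs, mul_pow, sq_abs, hs]
    field_simp
  have e3 : (0:ℝ) < ⟪d, w⟫^2 / ‖w‖^2 :=
    div_pos (by positivity) hwpos
  rw [e1, e2] at hsq
  linarith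


set_option maxHeartbeats 1000000 in
theorem stmt_14 {n : ℕ} (K U : Set (EuclideanSpace ℝ (Fin n)))
    (hKcl : IsClosed K) (hKcv : Convex ℝ K)
    (hU : ∃ (Q : EuclideanSpace ℝ (Fin n) →ₗ[ℝ] EuclideanSpace ℝ (Fin n))
      (b : EuclideanSpace ℝ (Fin n)), U = {x | Q x = b})
    (hKU : (K ∩ U).Nonempty)
    (S : EuclideanSpace ℝ (Fin n) → Set (EuclideanSpace ℝ (Fin n)))
    (hA1 : ∀ x, IsClosed (S x) ∧ Convex ℝ (S x))
    (hA2 : ∀ x, K ⊆ S x)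
    (hA3 : ∀ (z : ℕ → EuclideanSpace ℝ (Fin n)) (zstar : EuclideanSpace ℝ (Fin n)),
      Tendsto z atTop (𝓝 zstar) →
      Tendsto (fun k => Metric.infDist (z k) (S (z k))) atTop (𝓝 0) → zstar ∈ K)
    (PS PU : EuclideanSpace ℝ (Fin n) → EuclideanSpace ℝ (Fin n))
    (hPS : ∀ y, PS y ∈ S y ∧ ∀ w ∈ S y, dist y (PS y) ≤ dist y w)
    (hPU : ∀ y, PU y ∈ U ∧ ∀ w ∈ U, dist y (PU y) ≤ dist y w)
    (RS RU : EuclideanSpace ℝ (Fin n) → EuclideanSpace ℝ (Fin n))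
    (hRS : ∀ y, RS y = (2 : ℝ) • PS y - y)
    (hRU : ∀ y, RU y = (2 : ℝ) • PU y - y)
    (CS : EuclideanSpace ℝ (Fin n) → EuclideanSpace ℝ (Fin n))
    (hCS : ∀ x ∈ U,
      CS x ∈ affineSpan ℝ ({x, RS x, RU (RS x)} : Set (EuclideanSpace ℝ (Fin n))) ∧
      dist (CS x) x = dist (CS x) (RS x) ∧ dist (CS x) x = dist (CS x) (RU (RS x))) :
    ∀ x ∈ U, ∃ η : ℝ, 1 ≤ η ∧ CS x = x + η • (PU (PS x) - x) := by
  obtain ⟨Q, b, hQ⟩ := hU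
  have hUaff : ∀ u ∈ U, ∀ v ∈ U, ∀ s : ℝ, u + s • (v - u) ∈ U := by
    intro u hu v hv s
    rw [hQ] at hu hv ⊢
    simp only [Set.mem_setOf_eq] at hu hv ⊢
    rw [map_add, map_smul, map_sub, hu, hv]
    simp
  have horth : ∀ y u, u ∈ U → ⟪y - PU y, u - PU y⟫ = 0 :=
    fun y u hu => aux_proj_orth U hUaff PU hPU y u hu
  intro x hx
  set T := PU (PS x) with hTdef
  have hT : T ∈ U := (hPU (PS x)).1
  -- p and t
  set p : EuclideanSpace ℝ (Fin n) := PS x - x with hpdef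
  set t : EuclideanSpace ℝ (Fin n) := T - x with htdef
  have hpt : ⟪p, t⟫ = ⟪t, t⟫ := by
    have h0 : ⟪PS x - T, x - T⟫ = 0 := horth (PS x) x hx
    have h1 : PS x - T = p - t := by rw [hpdef, htdef]; abel
    have h2 : x - T = -t := by rw [htdef]; abel
    rw [h1, h2, inner_neg_right, inner_sub_left] at h0
    linarith
  -- PU (RS x) = 2T - x
  have hwU : (2:ℝ) • T - x ∈ U := by
    have := hUaff x hx T hT 2
    have e : x + (2:ℝ) • (T - x) = (2:ℝ) • T - x := by module
    rwa [e] at this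
  have hworth : ∀ u ∈ U, ⟪RS x - ((2:ℝ) • T - x), u - ((2:ℝ) • T - x)⟫ = 0 := by
    intro u hu
    have e1 : RS x - ((2:ℝ) • T - x) = (2:ℝ) • (PS x - T) := by
      rw [hRS]; module
    have e2 : u - ((2:ℝ) • T - x) = (u - T) + (x - T) := by module
    rw [e1, e2, inner_smul_left, inner_add_right]
    have h1 : ⟪PS x - T, u - T⟫ = 0 := horth (PS x) u hu
    have h2 : ⟪PS x - T, x - T⟫ = 0 := horth (PS x) x hx
    rw [h1, h2]
    simp
  have hPUy : PU (RS x) = (2:ℝ) • T - x := by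
    set w : EuclideanSpace ℝ (Fin n) := (2:ℝ) • T - x with hwdef
    set q : EuclideanSpace ℝ (Fin n) := PU (RS x) with hqdef
    have hqU : q ∈ U := (hPU (RS x)).1
    have hle : dist (RS x) q ≤ dist (RS x) w := (hPU (RS x)).2 w hwU
    have horthq : ⟪RS x - w, q - w⟫ = 0 := hworth q hqU
    have hpyth : ‖RS x - q‖^2 = ‖RS x - w‖^2 + ‖w - q‖^2 := by
      have e : RS x - q = (RS x - w) + (w - q) := by module
      rw [e, norm_add_sq_real]
      have : ⟪RS x - w, w - q⟫ = 0 := by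
        have e2 : w - q = -(q - w) := by module
        rw [e2, inner_neg_right, horthq, neg_zero]
      rw [this]
      ring
    rw [dist_eq_norm, dist_eq_norm] at hle
    have hn : ‖w - q‖^2 ≤ 0 := by
      nlinarith [norm_nonneg (RS x - q), norm_nonneg (RS x - w)]
    have : ‖w - q‖ = 0 := by
      nlinarith [norm_nonneg (w - q)]
    have := norm_eq_zero.mp this
    rw [sub_eq_zero] at this
    exact this.symm
  -- the reflections in terms of p, t
  have hy : RS x - x = (2:ℝ) • p := by rw [hRS, hpdef]; module
  have hz : RU (RS x) - x = (4:ℝ) • t - (2:ℝ) • p := by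
    rw [hRU, hPUy, hRS, hpdef, htdef]; module
  -- affine span membership gives coefficients
  obtain ⟨hmem, hd1, hd2⟩ := hCS x hx
  have hxmem : x ∈ affineSpan ℝ ({x, RS x, RU (RS x)} : Set (EuclideanSpace ℝ (Fin n))) :=
    mem_affineSpan ℝ (by simp)
  have hdir : CS x -ᵥ x ∈ (affineSpan ℝ ({x, RS x, RU (RS x)} : Set (EuclideanSpace ℝ (Fin n)))).direction :=
    AffineSubspace.vsub_mem_direction hmem hxmem
  rw [direction_affineSpan,
    vectorSpan_eq_span_vsub_set_right ℝ (show x ∈ ({x, RS x, RU (RS x)} : Set (EuclideanSpace ℝ (Fin n))) by simp)] at hdir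
  have himg : ((· -ᵥ x) '' ({x, RS x, RU (RS x)} : Set (EuclideanSpace ℝ (Fin n))))
      = {0, RS x - x, RU (RS x) - x} := by
    simp [Set.image_insert_eq, vsub_eq_sub]
  rw [himg, Submodule.span_insert_zero] at hdir
  rw [Submodule.mem_span_pair] at hdir
  obtain ⟨m, nn, hmn⟩ := hdir
  have hc : CS x - x = (2*m - 2*nn) • p + (4*nn) • t := by
    have : m • (RS x - x) + nn • (RU (RS x) - x) = CS x - x := by
      rw [← vsub_eq_sub (CS x) x]; exact hmn
    rw [hy, hz] at this
    rw [← this]; module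
  set α : ℝ := 2*m - 2*nn with hα
  set β : ℝ := 4*nn with hβ
  -- distance conditions as scalar equations
  have key : ∀ w : EuclideanSpace ℝ (Fin n),
      dist (CS x) x = dist (CS x) (x + w) → 2 * ⟪CS x - x, w⟫ = ⟪w, w⟫ := by
    intro w h
    rw [dist_eq_norm, dist_eq_norm] at h
    have e : CS x - (x + w) = (CS x - x) - w := by module
    rw [e] at h
    obtain ⟨c, hc'⟩ : ∃ c, CS x - x = c := ⟨_, rfl⟩
    rw [hc'] at h ⊢
    have h2 : ‖c‖^2 = ‖c - w‖^2 := by rw [h]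
    rw [norm_sub_sq_real] at h2
    rw [real_inner_self_eq_norm_sq]
    linarith
  have hd1' : 2 * ⟪CS x - x, (2:ℝ) • p⟫ = ⟪(2:ℝ) • p, (2:ℝ) • p⟫ := by
    apply key
    rw [show x + (2:ℝ) • p = RS x by rw [← hy]; module]
    exact hd1
  have hd2' : 2 * ⟪CS x - x, (4:ℝ) • t - (2:ℝ) • p⟫
      = ⟪(4:ℝ) • t - (2:ℝ) • p, (4:ℝ) • t - (2:ℝ) • p⟫ := by
    apply key
    rw [show x + ((4:ℝ) • t - (2:ℝ) • p) = RU (RS x) by rw [← hz]; module]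
    exact hd2
  clear_value p t
  -- expand inner products
  set pp : ℝ := ⟪p, p⟫ with hpp
  set tt : ℝ := ⟪t, t⟫ with htt
  have hcomm : ⟪t, p⟫ = tt := by rw [real_inner_comm, hpt]
  have E1 : α * pp + β * tt = pp := by
    rw [hc] at hd1'
    simp only [inner_add_left, inner_sub_left, inner_sub_right, inner_add_right,
      real_inner_smul_left, real_inner_smul_right] at hd1'
    simp only [hcomm, hpt, ← hpp, ← htt] at hd1'
    linarith
  have E2 : (α + β) * tt = pp := by
    rw [hc] at hd2'
    simp only [inner_add_left, inner_sub_left, inner_sub_right, inner_add_right,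
      real_inner_smul_left, real_inner_smul_right] at hd2'
    simp only [hcomm, hpt, ← hpp, ← htt] at hd2'
    linarith [E1]
  have htt0 : 0 ≤ tt := real_inner_self_nonneg
  -- case split
  by_cases hpeqt : p = t
  · refine ⟨1, le_refl 1, ?_⟩
    have hce : CS x - x = (α + β) • t := by rw [hc, hpeqt]; module
    have hgoal : CS x - x = (1:ℝ) • t := by
      by_cases ht0 : t = 0
      · rw [hce, ht0]; simp
      · have httne : tt ≠ 0 := by
          rw [htt]; exact inner_self_ne_zero.mpr ht0
        have : α + β = 1 := by
          have hppt : pp = tt := by rw [hpp, htt, hpeqt]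
          have h1 : (α + β - 1) * tt = 0 := by linear_combination E2 + hppt
          rcases mul_eq_zero.mp h1 with h | h
          · linarith
          · exact absurd h httne
        rw [hce, this]
    exact sub_eq_iff_eq_add'.mp hgoal
  · -- p ≠ t : pp > tt
    have hppgt : tt < pp := by
      have hptne : p - t ≠ 0 := sub_ne_zero.mpr hpeqt
      have h0 : (0:ℝ) < ⟪p - t, p - t⟫ := by
        rw [real_inner_self_eq_norm_sq]
        have := norm_pos_iff.mpr hptne
        positivity
      simp only [inner_sub_left, inner_sub_right] at h0
      simp only [hcomm, hpt, ← hpp, ← htt] at h0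
      linarith
    have hα0 : α = 0 := by
      have : α * (pp - tt) = 0 := by linarith [E1, E2]
      rcases mul_eq_zero.mp this with h | h
      · exact h
      · linarith
    have httpos : 0 < tt := by
      rcases lt_or_eq_of_le htt0 with h | h
      · exact h
      · exfalso
        rw [← h, mul_zero] at E2
        linarith
    refine ⟨β, ?_, ?_⟩
    · have hb : β * tt = pp := by rw [hα0] at E2; linarith [E2]
      nlinarith [hb, hppgt, httpos]
    · have hce : CS x - x = β • t := by rw [hc, hα0]; module
      exact sub_eq_iff_eq_add'.mp hce
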